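/- arXiv:2305.13459 — 4 statements merged into one kernel-verified Lean document; each statement's English description precedes it below -/
import Mathlib

section
/- Let (X_t)_{t≥0} be a sequence of nonnegative-integer-valued random variables that is non-increasing (X_{t+1} ≤ X_t almost surely), with X_0 ≤ D, and suppose there is δ > 0 such that E[X_t − X_{t+1} | X_t = x] ≥ δ·x for all x > 0 and all t. Let T = min{t : X_t = 0}. Then E[T] ≤ (1 + ln D)/δ. -/
open MeasureTheory
open scoped ENNReal

noncomputable def gfun (s : ℕ) : ℝ := if s = 0 then 0 else 1 + Real.log s

lemma gfun_nonneg (s : ℕ) : 0 ≤ gfun s := by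
  unfold gfun
  split
  · exact le_rfl
  · rename_i h
    have h1 : (1:ℝ) ≤ s := by exact_mod_cast Nat.one_le_iff_ne_zero.mpr h
    have := Real.log_nonneg h1
    linarith

lemma gfun_mono : Monotone gfun := by
  intro a b hab
  rcases Nat.eq_zero_or_pos a with ha | ha
  · subst ha; simpa [gfun] using gfun_nonneg b
  · have hb : 0 < b := lt_of_lt_of_le ha hab
    simp only [gfun, ha.ne', hb.ne', if_false]
    have : Real.log a ≤ Real.log b :=
      Real.log_le_log (by exact_mod_cast ha) (by exact_mod_cast hab)
    linarith

lemma gfun_le {s D : ℕ} (h : s ≤ D) : gfun s ≤ 1 + Real.log D := by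
  rcases Nat.eq_zero_or_pos s with hs | hs
  · subst hs
    have : 0 ≤ Real.log D := by
      rcases Nat.eq_zero_or_pos D with hD | hD
      · subst hD; simp
      · exact Real.log_nonneg (by exact_mod_cast hD)
    simp [gfun]; linarith
  · simp only [gfun, hs.ne', if_false]
    have : Real.log s ≤ Real.log D :=
      Real.log_le_log (by exact_mod_cast hs) (by exact_mod_cast h)
    linarith

lemma gfun_key {y s : ℕ} (hys : y ≤ s) (hs : 0 < s) :
    ((s:ℝ) - y) ≤ s * (gfun s - gfun y) := by
  have hs' : (0:ℝ) < s := by exact_mod_cast hs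
  rcases Nat.eq_zero_or_pos y with hy | hy
  · subst hy
    have h0 : gfun 0 = 0 := by simp [gfun]
    rw [h0]
    simp only [gfun, hs.ne', if_false, Nat.cast_zero, sub_zero]
    have : 0 ≤ Real.log s := Real.log_nonneg (by exact_mod_cast hs)
    nlinarith
  · have hy' : (0:ℝ) < y := by exact_mod_cast hy
    simp only [gfun, hs.ne', hy.ne', if_false]
    have hlog : Real.log ((y:ℝ)/s) ≤ (y:ℝ)/s - 1 := Real.log_le_sub_one_of_pos (by positivity)
    rw [Real.log_div (by positivity) (by positivity)] at hlog
    have h1 : Real.log s - Real.log y ≥ 1 - (y:ℝ)/s := by linarith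
    have h2 : (s:ℝ) * (1 - (y:ℝ)/s) = (s:ℝ) - y := by field_simp
    nlinarith

/-- Multiplicative drift theorem for nonnegative-integer processes: if `(X t)` is
a.s. non-increasing, `X 0 ≤ D` a.s., and the conditional one-step drift on
`{X t = x}` is at least `δ·x` for every `x > 0`, then the expected hitting time
`T = min {t | X t = 0}` (with value `⊤` if `0` is never hit) satisfies
`E[T] ≤ (1 + ln D)/δ`. -/
theorem multiplicative_drift {Ω : Type*} [MeasurableSpace Ω] (μ : Measure Ω)
    [IsProbabilityMeasure μ] (X : ℕ → Ω → ℕ) (hmeas : ∀ t, Measurable (X t))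
    (D : ℕ) (δ : ℝ) (hδ : 0 < δ)
    (hmono : ∀ t, ∀ᵐ ω ∂μ, X (t + 1) ω ≤ X t ω)
    (h0 : ∀ᵐ ω ∂μ, X 0 ω ≤ D)
    (hdrift : ∀ t : ℕ, ∀ x : ℕ, 0 < x → μ {ω | X t ω = x} ≠ 0 →
      δ * x * (μ {ω | X t ω = x}).toReal ≤
        ∫ ω in {ω | X t ω = x}, ((X t ω : ℝ) - (X (t + 1) ω : ℝ)) ∂μ) :
    ∫⁻ ω, sInf ((fun t : ℕ => (t : ℝ≥0∞)) '' {t : ℕ | X t ω = 0}) ∂μ ≤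
      ENNReal.ofReal ((1 + Real.log D) / δ) := by
  classical
  have hAset : ∀ t s, MeasurableSet {ω | X t ω = s} :=
    fun t s => (hmeas t) (measurableSet_singleton s)
  have hNset : ∀ t, MeasurableSet {ω | X t ω ≠ 0} := fun t => (hAset t 0).compl
  have hmono' : ∀ᵐ ω ∂μ, ∀ t, X (t + 1) ω ≤ X t ω := ae_all_iff.2 hmono
  have hle : ∀ᵐ ω ∂μ, ∀ t, X t ω ≤ D := by
    filter_upwards [hmono', h0] with ω hm h0'
    intro t
    have hanti : Antitone fun t => X t ω := antitone_nat_of_succ_le hm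
    exact le_trans (hanti (Nat.zero_le t)) h0'
  have hgm : ∀ t, Measurable fun ω => gfun (X t ω) :=
    fun t => (measurable_from_top : Measurable gfun).comp (hmeas t)
  have hgint : ∀ t, Integrable (fun ω => gfun (X t ω)) μ := by
    intro t
    refine (integrable_const (1 + Real.log D)).mono' (hgm t).aestronglyMeasurable ?_
    filter_upwards [hle] with ω hω
    rw [Real.norm_eq_abs, abs_of_nonneg (gfun_nonneg _)]
    exact gfun_le (hω t)
  have hXm : ∀ t, Measurable fun ω => (X t ω : ℝ) :=
    fun t => (measurable_from_top : Measurable fun n : ℕ => (n : ℝ)).comp (hmeas t)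
  have hXint : ∀ t, Integrable (fun ω => (X t ω : ℝ)) μ := by
    intro t
    refine (integrable_const (D : ℝ)).mono' (hXm t).aestronglyMeasurable ?_
    filter_upwards [hle] with ω hω
    rw [Real.norm_eq_abs, abs_of_nonneg (by positivity)]
    exact_mod_cast hω t
  -- one-step drift for the logarithmic potential
  have hstep : ∀ t, δ * (μ {ω | X t ω ≠ 0}).toReal ≤
      (∫ ω, gfun (X t ω) ∂μ) - ∫ ω, gfun (X (t + 1) ω) ∂μ := by
    intro t
    have hdiffint : Integrable (fun ω => gfun (X t ω) - gfun (X (t + 1) ω)) μ :=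
      (hgint t).sub (hgint (t + 1))
    have hnn : 0 ≤ᵐ[μ] fun ω => gfun (X t ω) - gfun (X (t + 1) ω) := by
      filter_upwards [hmono t] with ω hω
      simpa using sub_nonneg.mpr (gfun_mono hω)
    have hAs : ∀ s ∈ Finset.Icc 1 D, δ * (μ {ω | X t ω = s}).toReal ≤
        ∫ ω in {ω | X t ω = s}, (gfun (X t ω) - gfun (X (t + 1) ω)) ∂μ := by
      intro s hsmem
      have hs1 : 1 ≤ s := (Finset.mem_Icc.mp hsmem).1
      by_cases hz : μ {ω | X t ω = s} = 0
      · rw [Measure.restrict_eq_zero.mpr hz, integral_zero_measure]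
        simp [hz]
      · have hd := hdrift t s hs1 hz
        have hs' : (0:ℝ) < s := by exact_mod_cast hs1
        have hpt : ∀ᵐ ω ∂(μ.restrict {ω | X t ω = s}),
            ((X t ω : ℝ) - X (t + 1) ω) ≤ (s:ℝ) * (gfun (X t ω) - gfun (X (t + 1) ω)) := by
          filter_upwards [ae_restrict_mem (hAset t s), ae_restrict_of_ae (hmono t)] with ω hmem hm
          have hx : X t ω = s := hmem
          rw [hx]
          exact gfun_key (hx ▸ hm) hs1
        have h2 : ∫ ω in {ω | X t ω = s}, ((X t ω : ℝ) - X (t + 1) ω) ∂μ ≤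
            ∫ ω in {ω | X t ω = s}, (s:ℝ) * (gfun (X t ω) - gfun (X (t + 1) ω)) ∂μ :=
          integral_mono_ae ((hXint t).sub (hXint (t + 1))).restrict
            (hdiffint.restrict.const_mul _) hpt
        rw [integral_const_mul] at h2
        have h3 : (s:ℝ) * (δ * (μ {ω | X t ω = s}).toReal) ≤
            (s:ℝ) * ∫ ω in {ω | X t ω = s}, (gfun (X t ω) - gfun (X (t + 1) ω)) ∂μ := by
          nlinarith [hd, h2]
        exact le_of_mul_le_mul_left h3 hs'
    have hdisj : (↑(Finset.Icc 1 D) : Set ℕ).PairwiseDisjoint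
        (fun s => {ω | X t ω = s}) := by
      intro a _ b _ hab
      simp only [Function.onFun]
      apply Set.disjoint_left.mpr
      intro ω ha hb
      exact hab ((ha : X t ω = a).symm.trans hb)
    have hUeq : μ {ω | X t ω ≠ 0} = ∑ s ∈ Finset.Icc 1 D, μ {ω | X t ω = s} := by
      rw [← measure_biUnion_finset hdisj (fun s _ => hAset t s)]
      apply measure_congr
      rw [Filter.eventuallyEq_set]
      filter_upwards [hle] with ω hω
      constructor
      · intro hne
        exact Set.mem_biUnion
          (Finset.mem_Icc.mpr ⟨Nat.one_le_iff_ne_zero.mpr hne, hω t⟩) rfl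
      · intro h
        simp only [Set.mem_iUnion] at h
        obtain ⟨s, hs, hmem⟩ := h
        have hxs : X t ω = s := hmem
        show X t ω ≠ 0
        rw [hxs]
        exact Nat.one_le_iff_ne_zero.mp (Finset.mem_Icc.mp hs).1
    have hsum : ∑ s ∈ Finset.Icc 1 D, δ * (μ {ω | X t ω = s}).toReal ≤
        ∑ s ∈ Finset.Icc 1 D,
          ∫ ω in {ω | X t ω = s}, (gfun (X t ω) - gfun (X (t + 1) ω)) ∂μ :=
      Finset.sum_le_sum hAs
    rw [← integral_biUnion_finset _ (fun s _ => hAset t s) hdisj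
      (fun s _ => hdiffint.integrableOn)] at hsum
    have hfull : (∫ ω in ⋃ s ∈ Finset.Icc 1 D, {ω | X t ω = s},
        (gfun (X t ω) - gfun (X (t + 1) ω)) ∂μ) ≤
        ∫ ω, (gfun (X t ω) - gfun (X (t + 1) ω)) ∂μ :=
      setIntegral_le_integral hdiffint hnn
    have hIntsub : (∫ ω, (gfun (X t ω) - gfun (X (t + 1) ω)) ∂μ) =
        (∫ ω, gfun (X t ω) ∂μ) - ∫ ω, gfun (X (t + 1) ω) ∂μ :=
      integral_sub (hgint t) (hgint (t + 1))
    have hLHS : δ * (μ {ω | X t ω ≠ 0}).toReal =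
        ∑ s ∈ Finset.Icc 1 D, δ * (μ {ω | X t ω = s}).toReal := by
      rw [hUeq, ENNReal.toReal_sum (fun s _ => measure_ne_top μ _), Finset.mul_sum]
    linarith
  -- partial-sum bound
  have hpartial : ∀ n : ℕ,
      ∑ t ∈ Finset.range n, (μ {ω | X t ω ≠ 0}).toReal ≤ (1 + Real.log D) / δ := by
    intro n
    have h1 : ∑ t ∈ Finset.range n,
        ((∫ ω, gfun (X t ω) ∂μ) - ∫ ω, gfun (X (t + 1) ω) ∂μ)
        = (∫ ω, gfun (X 0 ω) ∂μ) - ∫ ω, gfun (X n ω) ∂μ :=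
      Finset.sum_range_sub' (fun t => ∫ ω, gfun (X t ω) ∂μ) n
    have h2 : δ * ∑ t ∈ Finset.range n, (μ {ω | X t ω ≠ 0}).toReal ≤
        (∫ ω, gfun (X 0 ω) ∂μ) - ∫ ω, gfun (X n ω) ∂μ := by
      rw [Finset.mul_sum, ← h1]
      exact Finset.sum_le_sum (fun t _ => hstep t)
    have h3 : ∫ ω, gfun (X 0 ω) ∂μ ≤ 1 + Real.log D := by
      calc ∫ ω, gfun (X 0 ω) ∂μ ≤ ∫ _ω, (1 + Real.log D) ∂μ :=
            integral_mono_ae (hgint 0) (integrable_const _)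
              (by filter_upwards [h0] with ω hω; exact gfun_le hω)
        _ = 1 + Real.log D := by simp
    have h4 : 0 ≤ ∫ ω, gfun (X n ω) ∂μ := integral_nonneg fun ω => gfun_nonneg _
    rw [le_div_iff₀ hδ]
    nlinarith
  have htsum : (∑' t, μ {ω | X t ω ≠ 0}) ≤ ENNReal.ofReal ((1 + Real.log D) / δ) := by
    rw [ENNReal.tsum_eq_iSup_sum]
    apply iSup_le
    intro F
    obtain ⟨n, hFn⟩ := F.exists_nat_subset_range
    calc ∑ t ∈ F, μ {ω | X t ω ≠ 0} ≤ ∑ t ∈ Finset.range n, μ {ω | X t ω ≠ 0} :=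
          Finset.sum_le_sum_of_subset hFn
      _ = ENNReal.ofReal (∑ t ∈ Finset.range n, (μ {ω | X t ω ≠ 0}).toReal) := by
          rw [ENNReal.ofReal_sum_of_nonneg (fun _ _ => ENNReal.toReal_nonneg)]
          exact Finset.sum_congr rfl
            (fun t _ => (ENNReal.ofReal_toReal (measure_ne_top μ _)).symm)
      _ ≤ _ := ENNReal.ofReal_le_ofReal (hpartial n)
  -- identify the hitting time with a sum of indicators
  have hTrep : ∀ᵐ ω ∂μ, sInf ((fun t : ℕ => (t : ℝ≥0∞)) '' {t : ℕ | X t ω = 0})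
      = ∑' t : ℕ, ({ω' | X t ω' ≠ 0}).indicator (fun _ => (1 : ℝ≥0∞)) ω := by
    filter_upwards [hmono'] with ω hm
    have hanti : Antitone fun t => X t ω := antitone_nat_of_succ_le hm
    by_cases hex : ∃ k, X k ω = 0
    · have hk0 : X (Nat.find hex) ω = 0 := Nat.find_spec hex
      have hlt : ∀ t, t < Nat.find hex → X t ω ≠ 0 := fun t ht => Nat.find_min hex ht
      have hge : ∀ t, Nat.find hex ≤ t → X t ω = 0 := fun t ht =>
        Nat.le_zero.mp (hk0 ▸ hanti ht)
      have hL : sInf ((fun t : ℕ => (t : ℝ≥0∞)) '' {t : ℕ | X t ω = 0})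
          = (Nat.find hex : ℝ≥0∞) := by
        apply le_antisymm
        · exact sInf_le ⟨Nat.find hex, hk0, rfl⟩
        · apply le_sInf
          rintro b ⟨m, hm', rfl⟩
          show (Nat.find hex : ℝ≥0∞) ≤ (m : ℝ≥0∞)
          exact Nat.cast_le.mpr (Nat.find_le hm')
      rw [hL]
      rw [tsum_eq_sum (s := Finset.range (Nat.find hex))
        (fun t ht => Set.indicator_of_notMem
          (show ω ∉ {ω' | X t ω' ≠ 0} from fun hne =>
            hne (hge t (le_of_not_gt (fun h => ht (Finset.mem_range.mpr h))))) _)]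
      have hone : ∀ t ∈ Finset.range (Nat.find hex),
          ({ω' | X t ω' ≠ 0}).indicator (fun _ => (1 : ℝ≥0∞)) ω = 1 := fun t ht =>
        Set.indicator_of_mem
          (show ω ∈ {ω' | X t ω' ≠ 0} from hlt t (Finset.mem_range.mp ht)) _
      rw [Finset.sum_congr rfl hone]
      simp
    · push_neg at hex
      have hL : {t : ℕ | X t ω = 0} = ∅ := Set.eq_empty_iff_forall_notMem.mpr hex
      rw [hL]
      simp only [Set.image_empty, sInf_empty]
      have hone : ∀ t : ℕ, ({ω' | X t ω' ≠ 0}).indicator (fun _ => (1 : ℝ≥0∞)) ω = 1 :=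
        fun t => Set.indicator_of_mem (show ω ∈ {ω' | X t ω' ≠ 0} from hex t) _
      rw [tsum_congr hone]
      exact (ENNReal.tsum_const_eq_top_of_ne_zero one_ne_zero).symm
  calc ∫⁻ ω, sInf ((fun t : ℕ => (t : ℝ≥0∞)) '' {t : ℕ | X t ω = 0}) ∂μ
      = ∫⁻ ω, ∑' t : ℕ, ({ω' | X t ω' ≠ 0}).indicator (fun _ => (1 : ℝ≥0∞)) ω ∂μ :=
        lintegral_congr_ae hTrep
    _ = ∑' t : ℕ, ∫⁻ ω, ({ω' | X t ω' ≠ 0}).indicator (fun _ => (1 : ℝ≥0∞)) ω ∂μ :=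
        lintegral_tsum (fun t => (measurable_const.indicator (hNset t)).aemeasurable)
    _ = ∑' t : ℕ, μ {ω | X t ω ≠ 0} :=
        tsum_congr (fun t => lintegral_indicator_one (hNset t))
    _ ≤ _ := htsum
end

section
/- Let P be an incomparable set of bit-strings (no one Pareto-dominated strictly by another under the fitness f = (f₁,f₂)) that contains at least one element encoding a spanning tree. Then every element of P encodes a spanning tree, and the number of distinct objective values |f(P)| is at most (n−1)·w_min + 1, where w_min = min(w₁^max, w₂^max). -/
open Finset

/-- The simple graph on `Fin n` encoded by the bit-string `s` (with edge `j`
having endpoints `E j`). -/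
def graphOf (n m : ℕ) (E : Fin m → Sym2 (Fin n)) (s : Fin m → Bool) : SimpleGraph (Fin n) :=
  SimpleGraph.fromEdgeSet {e | ∃ j, s j = true ∧ E j = e}

/-- Number of connected components of the subgraph encoded by `s` (isolated
vertices count). -/
noncomputable def numComp (n m : ℕ) (E : Fin m → Sym2 (Fin n)) (s : Fin m → Bool) : ℕ :=
  Nat.card (graphOf n m E s).ConnectedComponent

/-- Number of edges of the subgraph encoded by `s`. -/
def numEdges (m : ℕ) (s : Fin m → Bool) : ℕ :=
  (Finset.univ.filter fun j => s j = true).card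

/-- Maximum edge weight of the `i`-th weight function. -/
def wiMax (m : ℕ) (w : Fin 2 → Fin m → ℕ) (i : Fin 2) : ℕ :=
  Finset.univ.sup (w i)

/-- Maximum edge weight over both weight functions. -/
def wMax (m : ℕ) (w : Fin 2 → Fin m → ℕ) : ℕ :=
  max (wiMax m w 0) (wiMax m w 1)

/-- The penalty constant `w_ub = n² · w_max`. -/
def wUb (n m : ℕ) (w : Fin 2 → Fin m → ℕ) : ℕ :=
  n ^ 2 * wMax m w

/-- The fitness `fᵢ(s) = (c(s)-1)·w_ub² + (e(s)-(n-1))·w_ub + Σ_{j : sⱼ=1} wᵢ(eⱼ)`. -/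
noncomputable def fitness (n m : ℕ) (E : Fin m → Sym2 (Fin n)) (w : Fin 2 → Fin m → ℕ) (i : Fin 2)
    (s : Fin m → Bool) : ℤ :=
  ((numComp n m E s : ℤ) - 1) * (wUb n m w : ℤ) ^ 2 +
    ((numEdges m s : ℤ) - ((n : ℤ) - 1)) * (wUb n m w : ℤ) +
    ∑ j ∈ Finset.univ.filter (fun j => s j = true), (w i j : ℤ)

/-- `s` encodes a spanning tree: its graph is connected and it has `n - 1` edges. -/
def IsSpanningTreeBits (n m : ℕ) (E : Fin m → Sym2 (Fin n)) (s : Fin m → Bool) : Prop :=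
  (graphOf n m E s).Connected ∧ numEdges m s = n - 1

/-! ### Auxiliary lemmas -/

lemma exists_adj_dist_lt' {V : Type*} {G : SimpleGraph V} (h : G.Connected) (root w : V)
    (hw : w ≠ root) : ∃ u, G.Adj w u ∧ G.dist root u < G.dist root w := by
  have hd : G.dist root w ≠ 0 := by
    rw [SimpleGraph.dist_ne_zero_iff_ne_and_reachable]
    exact ⟨fun e => hw e.symm, h root w⟩
  obtain ⟨p, hp⟩ := (h root w).exists_walk_length_eq_dist
  have hnil : ¬ p.reverse.Nil := by
    rw [SimpleGraph.Walk.nil_iff_length_eq, SimpleGraph.Walk.length_reverse, hp]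
    exact hd
  obtain ⟨u, hadj, q, hq⟩ := SimpleGraph.Walk.not_nil_iff.mp hnil
  refine ⟨u, hadj, ?_⟩
  have hlen : q.length + 1 = G.dist root w := by
    have := congrArg SimpleGraph.Walk.length hq
    rw [SimpleGraph.Walk.length_reverse, hp, SimpleGraph.Walk.length_cons] at this
    omega
  have := SimpleGraph.dist_le q.reverse
  rw [SimpleGraph.Walk.length_reverse] at this
  omega

lemma connected_card_le' {V : Type*} [Fintype V] {G : SimpleGraph V} (h : G.Connected) :
    Fintype.card V - 1 ≤ Nat.card G.edgeSet := by
  classical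
  obtain ⟨root⟩ := h.nonempty
  choose u hadj hdist using fun (w : {w : V // w ≠ root}) =>
    exists_adj_dist_lt' h root w.1 w.2
  have hinj : Function.Injective
      (fun w : {w : V // w ≠ root} => (⟨s(w.1, u w), (hadj w)⟩ : G.edgeSet)) := by
    intro a b hab
    replace hab := Sym2.eq_iff.mp (congrArg Subtype.val hab)
    rcases hab with ⟨h1, _⟩ | ⟨h1, h2⟩
    · exact Subtype.ext h1
    · exfalso
      have ha := hdist a
      have hb := hdist b
      rw [h1] at ha
      rw [← h2] at hb
      omega
  have := Nat.card_le_card_of_injective _ hinj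
  have hcard : Nat.card {w : V // w ≠ root} = Fintype.card V - 1 := by
    simp only [Nat.card_eq_fintype_card]
    rw [Fintype.card_subtype_compl (p := fun w => w = root)]
    simp
  rw [← hcard]
  exact this

lemma edgeSet_card_le (n m : ℕ) (E : Fin m → Sym2 (Fin n)) (s : Fin m → Bool) :
    Nat.card (graphOf n m E s).edgeSet ≤ numEdges m s := by
  classical
  have hmem : ∀ e : (graphOf n m E s).edgeSet, ∃ j, s j = true ∧ E j = e.1 := by
    rintro ⟨e, he⟩
    rw [graphOf, SimpleGraph.edgeSet_fromEdgeSet] at he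
    exact he.1
  choose j hj hEj using hmem
  have hinj : Function.Injective
      (fun e : (graphOf n m E s).edgeSet => (⟨j e, hj e⟩ : {k : Fin m // s k = true})) := by
    intro a b hab
    simp only [Subtype.mk.injEq] at hab
    have : E (j a) = E (j b) := by rw [hab]
    rw [hEj a, hEj b] at this
    exact Subtype.ext this
  have h1 := Nat.card_le_card_of_injective _ hinj
  have h2 : Nat.card {k : Fin m // s k = true} = numEdges m s := by
    rw [Nat.card_eq_fintype_card, numEdges, Fintype.card_subtype]
  rw [← h2]
  exact h1

lemma numComp_pos' (n m : ℕ) (hn : 0 < n) (E : Fin m → Sym2 (Fin n)) (s : Fin m → Bool) :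
    1 ≤ numComp n m E s := by
  have : Nonempty (Fin n) := ⟨⟨0, hn⟩⟩
  have : Nonempty (graphOf n m E s).ConnectedComponent :=
    ⟨(graphOf n m E s).connectedComponentMk this.some⟩
  exact Nat.card_pos

lemma numComp_eq_one_iff (n m : ℕ) (hn : 0 < n) (E : Fin m → Sym2 (Fin n)) (s : Fin m → Bool) :
    numComp n m E s = 1 ↔ (graphOf n m E s).Connected := by
  have hne : Nonempty (Fin n) := ⟨⟨0, hn⟩⟩
  rw [numComp, Nat.card_eq_one_iff_unique]
  constructor
  · rintro ⟨hs, -⟩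
    rw [SimpleGraph.connected_iff]
    refine ⟨fun v w => ?_, hne⟩
    exact (SimpleGraph.ConnectedComponent.eq).mp (Subsingleton.elim _ _)
  · intro h
    exact ⟨h.preconnected.subsingleton_connectedComponent,
      ⟨(graphOf n m E s).connectedComponentMk hne.some⟩⟩

lemma ncard_antichain_le (S : Set (ℤ × ℤ)) (B : ℕ)
    (hS : ∀ p ∈ S, ∀ q ∈ S, p.1 ≤ q.1 → p.2 ≤ q.2 → p = q)
    (hB : ∀ p ∈ S, p.1 ∈ Set.Icc (0 : ℤ) (B : ℤ)) :
    S.ncard ≤ B + 1 := by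
  have hinj : Set.InjOn Prod.fst S := by
    intro p hp q hq hpq
    rcases le_total p.2 q.2 with h | h
    · exact hS p hp q hq (le_of_eq hpq) h
    · exact (hS q hq p hp (le_of_eq hpq.symm) h).symm
  rw [← Set.ncard_image_of_injOn hinj]
  have hsub : Prod.fst '' S ⊆ Set.Icc (0 : ℤ) (B : ℤ) := by
    rintro x ⟨p, hp, rfl⟩
    exact hB p hp
  calc (Prod.fst '' S).ncard ≤ (Set.Icc (0 : ℤ) (B : ℤ)).ncard :=
        Set.ncard_le_ncard hsub (Set.finite_Icc _ _)
    _ = B + 1 := by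
        rw [← Nat.card_coe_set_eq, Nat.card_eq_fintype_card,
          Fintype.card_ofFinset, Int.card_Icc]
        simp

lemma ncard_antichain_le' (S : Set (ℤ × ℤ)) (B : ℕ)
    (hS : ∀ p ∈ S, ∀ q ∈ S, p.1 ≤ q.1 → p.2 ≤ q.2 → p = q)
    (hB : ∀ p ∈ S, p.2 ∈ Set.Icc (0 : ℤ) (B : ℤ)) :
    S.ncard ≤ B + 1 := by
  have hswap : (Prod.swap '' S).ncard = S.ncard :=
    Set.ncard_image_of_injective _ Prod.swap_injective
  rw [← hswap]
  refine ncard_antichain_le _ B ?_ ?_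
  · rintro p ⟨a, ha, rfl⟩ q ⟨b, hb, rfl⟩ h1 h2
    have := hS a ha b hb h2 h1
    rw [this]
  · rintro p ⟨a, ha, rfl⟩
    exact hB a ha

lemma fitness_tree (n m : ℕ) (hn : 2 ≤ n) (E : Fin m → Sym2 (Fin n))
    (w : Fin 2 → Fin m → ℕ) (i : Fin 2) (s : Fin m → Bool)
    (hs : IsSpanningTreeBits n m E s) :
    fitness n m E w i s = ∑ j ∈ Finset.univ.filter (fun j => s j = true), (w i j : ℤ) := by
  obtain ⟨hconn, hedges⟩ := hs
  have hc : numComp n m E s = 1 := (numComp_eq_one_iff n m (by omega) E s).mpr hconn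
  rw [fitness, hc, hedges]
  have : ((n - 1 : ℕ) : ℤ) = (n : ℤ) - 1 := by
    have : (1 : ℕ) ≤ n := by omega
    push_cast [this]
    ring
  rw [this]
  ring

lemma sum_w_bounds (n m : ℕ) (E : Fin m → Sym2 (Fin n))
    (w : Fin 2 → Fin m → ℕ) (i : Fin 2) (s : Fin m → Bool)
    (hs : IsSpanningTreeBits n m E s) :
    (0 : ℤ) ≤ ∑ j ∈ Finset.univ.filter (fun j => s j = true), (w i j : ℤ) ∧
    ∑ j ∈ Finset.univ.filter (fun j => s j = true), (w i j : ℤ) ≤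
      (((n - 1) * wiMax m w i : ℕ) : ℤ) := by
  constructor
  · exact Finset.sum_nonneg fun j _ => by positivity
  · have h := Finset.sum_le_card_nsmul (Finset.univ.filter (fun j => s j = true))
      (fun j => (w i j : ℤ)) ((wiMax m w i : ℤ))
      (fun j _ => Int.ofNat_le.mpr (Finset.le_sup (f := w i) (Finset.mem_univ j)))
    rw [nsmul_eq_mul] at h
    have hcard : (Finset.univ.filter (fun j => s j = true)).card = n - 1 := hs.2
    rw [hcard] at h
    calc _ ≤ ((n - 1 : ℕ) : ℤ) * ((wiMax m w i : ℕ) : ℤ) := h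
      _ = (((n - 1) * wiMax m w i : ℕ) : ℤ) := by push_cast; ring

lemma fitness_nontree (n m : ℕ) (hn : 2 ≤ n) (E : Fin m → Sym2 (Fin n))
    (w : Fin 2 → Fin m → ℕ) (i : Fin 2) (s : Fin m → Bool)
    (hwpos : 1 ≤ wMax m w) (hs : ¬ IsSpanningTreeBits n m E s) :
    (wUb n m w : ℤ) ≤ fitness n m E w i s := by
  have hW : (n : ℤ) ≤ (wUb n m w : ℤ) := by
    have h1 : n ≤ n ^ 2 := Nat.le_self_pow (by norm_num) n
    have h2 : n ^ 2 ≤ n ^ 2 * wMax m w :=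
      le_mul_of_one_le_right (Nat.zero_le _) hwpos
    rw [wUb]
    exact_mod_cast le_trans h1 h2
  have hsum : (0 : ℤ) ≤ ∑ j ∈ Finset.univ.filter (fun j => s j = true), (w i j : ℤ) :=
    Finset.sum_nonneg fun j _ => by positivity
  by_cases hconn : (graphOf n m E s).Connected
  · -- connected but wrong number of edges
    have hc : numComp n m E s = 1 := (numComp_eq_one_iff n m (by omega) E s).mpr hconn
    have hne : numEdges m s ≠ n - 1 := fun h => hs ⟨hconn, h⟩
    have hge : n - 1 ≤ numEdges m s := by
      have h1 := connected_card_le' hconn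
      have h2 := edgeSet_card_le n m E s
      simp only [Fintype.card_fin] at h1
      omega
    have hge' : n ≤ numEdges m s := by omega
    have he : (1 : ℤ) ≤ (numEdges m s : ℤ) - ((n : ℤ) - 1) := by
      have : (n : ℤ) ≤ (numEdges m s : ℤ) := by exact_mod_cast hge'
      omega
    rw [fitness, hc]
    have hWpos : (0 : ℤ) ≤ (wUb n m w : ℤ) := by positivity
    have h3 : (wUb n m w : ℤ) ≤ ((numEdges m s : ℤ) - ((n : ℤ) - 1)) * (wUb n m w : ℤ) :=
      le_mul_of_one_le_left hWpos he
    push_cast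
    linarith
  · -- disconnected
    have hc2 : 2 ≤ numComp n m E s := by
      have h1 := numComp_pos' n m (by omega) E s
      have h2 : numComp n m E s ≠ 1 := fun h =>
        hconn ((numComp_eq_one_iff n m (by omega) E s).mp h)
      omega
    have hc2' : (2 : ℤ) ≤ (numComp n m E s : ℤ) := by exact_mod_cast hc2
    have hee : (0 : ℤ) ≤ (numEdges m s : ℤ) := by positivity
    rw [fitness]
    have hWp : (0 : ℤ) ≤ (wUb n m w : ℤ) := by positivity
    have t0 : (0 : ℤ) ≤ (numEdges m s : ℤ) * (wUb n m w : ℤ) := mul_nonneg hee hWp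
    have t1 : (n : ℤ) * (wUb n m w : ℤ) ≤ (wUb n m w : ℤ) * (wUb n m w : ℤ) :=
      mul_le_mul_of_nonneg_right hW hWp
    have t2 : 2 * ((wUb n m w : ℤ) * (wUb n m w : ℤ)) ≤
        (numComp n m E s : ℤ) * ((wUb n m w : ℤ) * (wUb n m w : ℤ)) :=
      mul_le_mul_of_nonneg_right hc2' (mul_nonneg hWp hWp)
    nlinarith [hsum, t0, t1, t2]

/-- An incomparable set of bit-strings (no strict Pareto domination under
`f = (f₁, f₂)`) that contains a spanning tree consists only of spanning trees,
and has at most `(n-1)·w_min + 1` distinct objective values. -/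
theorem incomparable_population_bound (n m : ℕ) (hn : 2 ≤ n)
    (E : Fin m → Sym2 (Fin n)) (hE : Function.Injective E)
    (w : Fin 2 → Fin m → ℕ) (hwpos : 1 ≤ wMax m w)
    (P : Set (Fin m → Bool))
    (hinc : ∀ s ∈ P, ∀ s' ∈ P,
      fitness n m E w 0 s ≤ fitness n m E w 0 s' →
      fitness n m E w 1 s ≤ fitness n m E w 1 s' →
      fitness n m E w 0 s = fitness n m E w 0 s' ∧
        fitness n m E w 1 s = fitness n m E w 1 s')
    (hst : ∃ s ∈ P, IsSpanningTreeBits n m E s) :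
    (∀ s ∈ P, IsSpanningTreeBits n m E s) ∧
      Set.ncard ((fun s => (fitness n m E w 0 s, fitness n m E w 1 s)) '' P) ≤
        (n - 1) * min (wiMax m w 0) (wiMax m w 1) + 1 := by
  obtain ⟨t, htP, htst⟩ := hst
  -- fitness of a spanning tree is strictly below wUb
  have htree_lt : ∀ (s : Fin m → Bool), IsSpanningTreeBits n m E s → ∀ i,
      fitness n m E w i s < (wUb n m w : ℤ) := by
    intro s hs i
    have h2 := (sum_w_bounds n m E w i s hs).2
    have hle : (n - 1) * wiMax m w i < n ^ 2 * wMax m w := by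
      have hwi : wiMax m w i ≤ wMax m w := by
        rw [wMax]
        fin_cases i
        · exact le_max_left _ _
        · exact le_max_right _ _
      calc (n - 1) * wiMax m w i ≤ (n - 1) * wMax m w :=
            Nat.mul_le_mul_left _ hwi
        _ < n ^ 2 * wMax m w := by
            have h1 : n - 1 < n ^ 2 :=
              lt_of_lt_of_le (by omega) (Nat.le_self_pow (by norm_num) n)
            exact mul_lt_mul_of_pos_right h1 (by omega)
    calc fitness n m E w i s ≤ (((n - 1) * wiMax m w i : ℕ) : ℤ) := by
          rw [fitness_tree n m hn E w i s hs]; exact h2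
      _ < ((n ^ 2 * wMax m w : ℕ) : ℤ) := by exact_mod_cast hle
      _ = (wUb n m w : ℤ) := by rw [wUb]
  -- everything in P is a spanning tree
  have hall : ∀ s ∈ P, IsSpanningTreeBits n m E s := by
    intro s hsP
    by_contra hnot
    have h0 : fitness n m E w 0 t < fitness n m E w 0 s :=
      lt_of_lt_of_le (htree_lt t htst 0) (fitness_nontree n m hn E w 0 s hwpos hnot)
    have h1 : fitness n m E w 1 t < fitness n m E w 1 s :=
      lt_of_lt_of_le (htree_lt t htst 1) (fitness_nontree n m hn E w 1 s hwpos hnot)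
    obtain ⟨he0, -⟩ := hinc t htP s hsP h0.le h1.le
    exact h0.ne he0
  refine ⟨hall, ?_⟩
  set S := (fun s => (fitness n m E w 0 s, fitness n m E w 1 s)) '' P with hSdef
  have hanti : ∀ p ∈ S, ∀ q ∈ S, p.1 ≤ q.1 → p.2 ≤ q.2 → p = q := by
    rintro p ⟨a, ha, rfl⟩ q ⟨b, hb, rfl⟩ h1 h2
    obtain ⟨e0, e1⟩ := hinc a ha b hb h1 h2
    simp only [Prod.mk.injEq]
    exact ⟨e0, e1⟩
  have hbound : ∀ (i : Fin 2), ∀ s ∈ P,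
      fitness n m E w i s ∈ Set.Icc (0 : ℤ) (((n - 1) * wiMax m w i : ℕ) : ℤ) := by
    intro i s hsP
    have hs := hall s hsP
    obtain ⟨hge, hle⟩ := sum_w_bounds n m E w i s hs
    rw [fitness_tree n m hn E w i s hs]
    exact ⟨hge, hle⟩
  rcases le_total (wiMax m w 0) (wiMax m w 1) with hmin | hmin
  · rw [min_eq_left hmin]
    refine ncard_antichain_le S ((n - 1) * wiMax m w 0) hanti ?_
    rintro p ⟨a, ha, rfl⟩
    exact hbound 0 a ha
  · rw [min_eq_right hmin]
    refine ncard_antichain_le' S ((n - 1) * wiMax m w 1) hanti ?_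
    rintro p ⟨a, ha, rfl⟩
    exact hbound 1 a ha
end

section
/- Let X be a finite list of points in ℝ² sorted independently by each coordinate, and define the crowding distance of a point as the sum over the two coordinates of the normalized gap to its neighbors in the sorted order (with value +∞ for boundary points). Then for any fixed value v ∈ ℝ², at most 4 points of X with objective value v can have strictly positive crowding distance. -/
open scoped Classical

/-- Crowding distance contribution of one objective `f`: for the individual `i`,
let `p` be its position in the sorted order `σ`; boundary positions get `⊤`,
otherwise the normalized gap between the two neighbours. -/
noncomputable def cdisAux {N : ℕ} (f : Fin N → ℝ) (σ : Equiv.Perm (Fin N)) (i : Fin N) :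
    EReal :=
  if h : (σ.symm i : ℕ) = 0 ∨ (σ.symm i : ℕ) = N - 1 then ⊤
  else
    (((f (σ ⟨(σ.symm i : ℕ) + 1, by have := (σ.symm i).isLt; omega⟩) -
          f (σ ⟨(σ.symm i : ℕ) - 1, by have := (σ.symm i).isLt; omega⟩)) /
        (f (σ ⟨N - 1, by have := (σ.symm i).isLt; omega⟩) -
          f (σ ⟨0, by have := (σ.symm i).isLt; omega⟩)) : ℝ) : EReal)

lemma cdisAux_nonneg {N : ℕ} (f : Fin N → ℝ) (σ : Equiv.Perm (Fin N))
    (h : Monotone fun p => f (σ p)) (i : Fin N) : 0 ≤ cdisAux f σ i := by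
  unfold cdisAux
  split
  · exact le_top
  · rename_i hc
    push_neg at hc
    have hlt := (σ.symm i).isLt
    refine EReal.coe_nonneg.mpr (div_nonneg (sub_nonneg.mpr (h ?_)) (sub_nonneg.mpr (h ?_)))
    · simp only [Fin.le_def]; omega
    · simp only [Fin.le_def]; omega

lemma cdisAux_pos_minmax {N : ℕ} (f : Fin N → ℝ) (σ : Equiv.Perm (Fin N))
    (h : Monotone fun p => f (σ p)) (p : Fin N) (hp : 0 < cdisAux f σ (σ p)) :
    (∀ q, f (σ q) = f (σ p) → p ≤ q) ∨ (∀ q, f (σ q) = f (σ p) → q ≤ p) := by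
  unfold cdisAux at hp
  simp only [Equiv.symm_apply_apply] at hp
  have hlt := p.isLt
  split at hp
  · rename_i hc
    rcases hc with hc | hc
    · left; intro q _; simp only [Fin.le_def]; omega
    · right; intro q _
      have := q.isLt
      simp only [Fin.le_def]; omega
  · rename_i hc
    push_neg at hc
    have hpos : 0 < (f (σ ⟨(p : ℕ) + 1, by omega⟩) - f (σ ⟨(p : ℕ) - 1, by omega⟩)) /
        (f (σ ⟨N - 1, by omega⟩) - f (σ ⟨0, by omega⟩)) := EReal.coe_pos.mp hp
    have hnum : f (σ ⟨(p : ℕ) - 1, by omega⟩) < f (σ ⟨(p : ℕ) + 1, by omega⟩) := by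
      by_contra hle
      push_neg at hle
      have hden : (0:ℝ) ≤ f (σ ⟨N - 1, by omega⟩) - f (σ ⟨0, by omega⟩) := by
        refine sub_nonneg.mpr (h ?_)
        simp only [Fin.le_def]; omega
      have := div_nonpos_of_nonpos_of_nonneg (sub_nonpos.mpr hle) hden
      linarith
    have hlow : f (σ ⟨(p : ℕ) - 1, by omega⟩) ≤ f (σ p) := by
      refine h ?_; simp only [Fin.le_def]; omega
    have hhigh : f (σ p) ≤ f (σ ⟨(p : ℕ) + 1, by omega⟩) := by
      refine h ?_; simp only [Fin.le_def]; omega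
    rcases lt_or_ge (f (σ ⟨(p : ℕ) - 1, by omega⟩)) (f (σ p)) with hA | hA
    · left
      intro q hq
      by_contra hqp
      push_neg at hqp
      have hq1 : q ≤ (⟨(p : ℕ) - 1, by omega⟩ : Fin N) := by
        simp only [Fin.le_def]
        have := Fin.lt_def.mp hqp
        omega
      have := h hq1
      simp only at this
      rw [hq] at this
      linarith
    · right
      have hB : f (σ p) < f (σ ⟨(p : ℕ) + 1, by omega⟩) := by
        calc f (σ p) ≤ f (σ ⟨(p : ℕ) - 1, by omega⟩) := hA
          _ < _ := hnum
      intro q hq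
      by_contra hqp
      push_neg at hqp
      have hq1 : (⟨(p : ℕ) + 1, by omega⟩ : Fin N) ≤ q := by
        simp only [Fin.le_def]
        have := Fin.lt_def.mp hqp
        omega
      have := h hq1
      simp only at this
      rw [hq] at this
      linarith

/-- For a population of points of ℝ² with fixed sorted orders `σ₁, σ₂` by each
coordinate, at most `4` individuals with a given objective value `v` can have
strictly positive (total) crowding distance. -/
theorem crowding_distance_at_most_four (N : ℕ) (hN : 2 ≤ N) (x : Fin N → ℝ × ℝ)
    (σ₁ σ₂ : Equiv.Perm (Fin N))
    (h₁ : Monotone fun p => (x (σ₁ p)).1) (h₂ : Monotone fun p => (x (σ₂ p)).2)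
    (v : ℝ × ℝ) :
    (Finset.univ.filter fun i : Fin N =>
        x i = v ∧ 0 < cdisAux (fun j => (x j).1) σ₁ i + cdisAux (fun j => (x j).2) σ₂ i).card
      ≤ 4 := by
  set F := (Finset.univ.filter fun i : Fin N =>
        x i = v ∧ 0 < cdisAux (fun j => (x j).1) σ₁ i + cdisAux (fun j => (x j).2) σ₂ i) with hF
  rcases F.eq_empty_or_nonempty with hE | hne
  · simp [hE]
  · obtain ⟨i0, hi0⟩ := hne
    have hi0' := Finset.mem_filter.mp hi0
    set I₁ := Finset.univ.filter (fun p => (x (σ₁ p)).1 = v.1) with hI1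
    set I₂ := Finset.univ.filter (fun p => (x (σ₂ p)).2 = v.2) with hI2
    have ne1 : I₁.Nonempty := ⟨σ₁.symm i0, by simp [hI1, hi0'.2.1]⟩
    have ne2 : I₂.Nonempty := ⟨σ₂.symm i0, by simp [hI2, hi0'.2.1]⟩
    have hsub : F ⊆ {σ₁ (I₁.min' ne1), σ₁ (I₁.max' ne1), σ₂ (I₂.min' ne2), σ₂ (I₂.max' ne2)} := by
      intro i hi
      have hi' := Finset.mem_filter.mp hi
      have hxv := hi'.2.1
      have hpos := hi'.2.2
      have hn1 : 0 ≤ cdisAux (fun j => (x j).1) σ₁ i := cdisAux_nonneg _ _ h₁ i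
      have hn2 : 0 ≤ cdisAux (fun j => (x j).2) σ₂ i := cdisAux_nonneg _ _ h₂ i
      have hor : 0 < cdisAux (fun j => (x j).1) σ₁ i ∨ 0 < cdisAux (fun j => (x j).2) σ₂ i := by
        by_contra hcon
        push_neg at hcon
        have e1 : cdisAux (fun j => (x j).1) σ₁ i = 0 := le_antisymm hcon.1 hn1
        have e2 : cdisAux (fun j => (x j).2) σ₂ i = 0 := le_antisymm hcon.2 hn2
        rw [e1, e2] at hpos
        simp at hpos
      simp only [Finset.mem_insert, Finset.mem_singleton]
      rcases hor with hpos1 | hpos2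
      · have hp : 0 < cdisAux (fun j => (x j).1) σ₁ (σ₁ (σ₁.symm i)) := by
          rwa [Equiv.apply_symm_apply]
        have key := cdisAux_pos_minmax _ σ₁ h₁ (σ₁.symm i) hp
        have hfi : (x (σ₁ (σ₁.symm i))).1 = v.1 := by rw [Equiv.apply_symm_apply, hxv]
        have hmem : σ₁.symm i ∈ I₁ := by simp [hI1, hfi, hxv]
        rcases key with hmin | hmax
        · left
          have h1' : σ₁.symm i ≤ I₁.min' ne1 := by
            apply hmin
            have hv' : (x (σ₁ (I₁.min' ne1))).1 = v.1 :=
              (Finset.mem_filter.mp (Finset.min'_mem I₁ ne1)).2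
            rw [hv', hfi]
          have h2' : I₁.min' ne1 ≤ σ₁.symm i := Finset.min'_le _ _ hmem
          have : σ₁.symm i = I₁.min' ne1 := le_antisymm h1' h2'
          rw [← this, Equiv.apply_symm_apply]
        · right; left
          have h1' : I₁.max' ne1 ≤ σ₁.symm i := by
            apply hmax
            have hv' : (x (σ₁ (I₁.max' ne1))).1 = v.1 :=
              (Finset.mem_filter.mp (Finset.max'_mem I₁ ne1)).2
            rw [hv', hfi]
          have h2' : σ₁.symm i ≤ I₁.max' ne1 := Finset.le_max' _ _ hmem
          have : σ₁.symm i = I₁.max' ne1 := le_antisymm h2' h1'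
          rw [← this, Equiv.apply_symm_apply]
      · have hp : 0 < cdisAux (fun j => (x j).2) σ₂ (σ₂ (σ₂.symm i)) := by
          rwa [Equiv.apply_symm_apply]
        have key := cdisAux_pos_minmax _ σ₂ h₂ (σ₂.symm i) hp
        have hfi : (x (σ₂ (σ₂.symm i))).2 = v.2 := by rw [Equiv.apply_symm_apply, hxv]
        have hmem : σ₂.symm i ∈ I₂ := by simp [hI2, hfi, hxv]
        rcases key with hmin | hmax
        · right; right; left
          have h1' : σ₂.symm i ≤ I₂.min' ne2 := by
            apply hmin
            have hv' : (x (σ₂ (I₂.min' ne2))).2 = v.2 :=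
              (Finset.mem_filter.mp (Finset.min'_mem I₂ ne2)).2
            rw [hv', hfi]
          have h2' : I₂.min' ne2 ≤ σ₂.symm i := Finset.min'_le _ _ hmem
          have : σ₂.symm i = I₂.min' ne2 := le_antisymm h1' h2'
          rw [← this, Equiv.apply_symm_apply]
        · right; right; right
          have h1' : I₂.max' ne2 ≤ σ₂.symm i := by
            apply hmax
            have hv' : (x (σ₂ (I₂.max' ne2))).2 = v.2 :=
              (Finset.mem_filter.mp (Finset.max'_mem I₂ ne2)).2
            rw [hv', hfi]
          have h2' : σ₂.symm i ≤ I₂.max' ne2 := Finset.le_max' _ _ hmem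
          have : σ₂.symm i = I₂.max' ne2 := le_antisymm h2' h1'
          rw [← this, Equiv.apply_symm_apply]
    calc F.card ≤ _ := Finset.card_le_card hsub
      _ ≤ 4 := by
        apply le_trans (Finset.card_insert_le _ _)
        have : ({σ₁ (I₁.max' ne1), σ₂ (I₂.min' ne2), σ₂ (I₂.max' ne2)} : Finset (Fin N)).card ≤ 3 := by
          apply le_trans (Finset.card_insert_le _ _)
          have := Finset.card_insert_le (σ₂ (I₂.min' ne2)) ({σ₂ (I₂.max' ne2)} : Finset (Fin N))
          simp at this ⊢
          omega
        omega
end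

section
/- Let T be a spanning tree of a connected graph G and let T* be a spanning tree minimizing a weight function w̃ which is a nonnegative linear combination of the edge weights. Then there exist edge pairs (e₁,f₁), …, (e_k,f_k) with k ≤ n−1, where f_j ∈ T \ T* and e_j ∈ T* \ T, such that each exchange T − f_j + e_j is a spanning tree and Σ_j (w̃(f_j) − w̃(e_j)) ≥ w̃(T) − w̃(T*). -/
/-- `T` is a spanning tree of `G`: its edges are edges of `G`, the graph it spans is
connected, and it has `|V| - 1` edges. -/
def IsSpanningTreeEdges {V : Type*} [Fintype V] (G : SimpleGraph V)
    (T : Finset (Sym2 V)) : Prop :=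
  ↑T ⊆ G.edgeSet ∧ (SimpleGraph.fromEdgeSet (↑T : Set (Sym2 V))).Connected ∧
    T.card = Fintype.card V - 1

section ExchangeAux

open SimpleGraph Finset

set_option linter.unusedSectionVars false

variable {V : Type*} [Fintype V] [DecidableEq V]

private lemma adj_fe {S : Finset (Sym2 V)} {a b : V} :
    (fromEdgeSet (↑S : Set (Sym2 V))).Adj a b ↔ s(a, b) ∈ S ∧ a ≠ b := by
  simp [fromEdgeSet_adj]

/-- After deleting the edge `s(u,v)`, any walk from `w` to `z` yields reachability
either directly, or to the two endpoints crosswise. -/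
private lemma reach_erase_or {S : Finset (Sym2 V)} (u v : V) {w z : V}
    (p : (fromEdgeSet (↑S : Set (Sym2 V))).Walk w z) :
    (fromEdgeSet (↑(S.erase s(u, v)) : Set (Sym2 V))).Reachable w z ∨
    ((fromEdgeSet (↑(S.erase s(u, v)) : Set (Sym2 V))).Reachable w u ∧
      (fromEdgeSet (↑(S.erase s(u, v)) : Set (Sym2 V))).Reachable z v) ∨
    ((fromEdgeSet (↑(S.erase s(u, v)) : Set (Sym2 V))).Reachable w v ∧
      (fromEdgeSet (↑(S.erase s(u, v)) : Set (Sym2 V))).Reachable z u) := by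
  induction p with
  | nil => exact Or.inl (Reachable.refl _)
  | @cons a b c h q ih =>
    obtain ⟨hm, hab⟩ := adj_fe.mp h
    by_cases habuv : s(a, b) = s(u, v)
    · rw [Sym2.eq_iff] at habuv
      rcases habuv with ⟨rfl, rfl⟩ | ⟨rfl, rfl⟩
      · -- a = u, b = v
        rcases ih with h1 | ⟨h1, h2⟩ | ⟨h1, h2⟩
        · exact Or.inr (Or.inl ⟨Reachable.refl _, h1.symm⟩)
        · exact Or.inr (Or.inl ⟨Reachable.refl _, h2⟩)
        · exact Or.inl h2.symm
      · -- a = v, b = u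
        rcases ih with h1 | ⟨h1, h2⟩ | ⟨h1, h2⟩
        · exact Or.inr (Or.inr ⟨Reachable.refl _, h1.symm⟩)
        · exact Or.inl h2.symm
        · exact Or.inr (Or.inr ⟨Reachable.refl _, h2⟩)
    · have hadj : (fromEdgeSet (↑(S.erase s(u, v)) : Set (Sym2 V))).Adj a b :=
        adj_fe.mpr ⟨Finset.mem_erase.mpr ⟨habuv, hm⟩, hab⟩
      rcases ih with h1 | ⟨h1, h2⟩ | ⟨h1, h2⟩
      · exact Or.inl (hadj.reachable.trans h1)
      · exact Or.inr (Or.inl ⟨hadj.reachable.trans h1, h2⟩)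
      · exact Or.inr (Or.inr ⟨hadj.reachable.trans h1, h2⟩)

/-- A trail from `u` (satisfying `X`) to `v` (not satisfying `X`) contains a crossing
edge `s(x,y)` such that after removing it, `u` still reaches `x` and `y` still reaches `v`. -/
private lemma cross_lemma {S : Finset (Sym2 V)} (X : V → Prop) [DecidablePred X] :
    ∀ {u v : V} (p : (fromEdgeSet (↑S : Set (Sym2 V))).Walk u v), p.IsTrail → X u → ¬ X v →
      ∃ x y : V, s(x, y) ∈ p.edges ∧ X x ∧ ¬ X y ∧
        (fromEdgeSet (↑(S.erase s(x, y)) : Set (Sym2 V))).Reachable u x ∧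
        (fromEdgeSet (↑(S.erase s(x, y)) : Set (Sym2 V))).Reachable y v := by
  intro u v p
  induction p with
  | nil => exact fun _ hu hv => absurd hu hv
  | @cons a b c h q ih =>
    intro ht hu hv
    rw [Walk.isTrail_cons] at ht
    obtain ⟨hqt, hne⟩ := ht
    by_cases hb : X b
    · obtain ⟨x, y, hmem, hx, hy, hbx, hyv⟩ := ih hqt hb hv
      have hne2 : s(a, b) ≠ s(x, y) := fun hh => hne (hh ▸ hmem)
      obtain ⟨hm, hab⟩ := adj_fe.mp h
      have hadj : (fromEdgeSet (↑(S.erase s(x, y)) : Set (Sym2 V))).Adj a b :=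
        adj_fe.mpr ⟨Finset.mem_erase.mpr ⟨hne2, hm⟩, hab⟩
      exact ⟨x, y, by rw [Walk.edges_cons]; exact List.mem_cons_of_mem _ hmem, hx, hy,
        hadj.reachable.trans hbx, hyv⟩
    · refine ⟨a, b, by rw [Walk.edges_cons]; exact List.mem_cons_self, hu, hb,
        Reachable.refl _, ⟨q.transfer _ fun e he => ?_⟩⟩
      have h1 := q.edges_subset_edgeSet he
      rw [edgeSet_fromEdgeSet] at h1 ⊢
      exact ⟨Finset.mem_coe.mpr (Finset.mem_erase.mpr
        ⟨fun hh => hne (hh ▸ he), Finset.mem_coe.mp h1.1⟩), h1.2⟩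

private lemma fe_sdiff {S : Finset (Sym2 V)} (e : Sym2 V) :
    fromEdgeSet (↑S : Set (Sym2 V)) \ fromEdgeSet {e} =
      fromEdgeSet (↑(S.erase e) : Set (Sym2 V)) := by
  ext a b
  simp only [sdiff_adj, fromEdgeSet_adj, Finset.mem_coe, Finset.mem_erase,
    Set.mem_singleton_iff]
  tauto

/-- A connected graph on `V` given by an edge finset has at least `|V| - 1` edges. -/
private lemma conn_card_le :
    ∀ S : Finset (Sym2 V), (fromEdgeSet (↑S : Set (Sym2 V))).Connected →
      Fintype.card V ≤ S.card + 1 := by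
  intro S
  induction S using Finset.strongInduction with
  | _ S ih =>
    intro hc
    by_cases hac : (fromEdgeSet (↑S : Set (Sym2 V))).IsAcyclic
    · haveI : Fintype (fromEdgeSet (↑S : Set (Sym2 V))).edgeSet :=
        Set.Finite.fintype (Set.toFinite _)
      have h1 := IsTree.card_edgeFinset ⟨hc, hac⟩
      have h2 : (fromEdgeSet (↑S : Set (Sym2 V))).edgeFinset ⊆ S := by
        intro e he
        rw [mem_edgeFinset, edgeSet_fromEdgeSet] at he
        exact Finset.mem_coe.mp he.1
      have h3 := Finset.card_le_card h2
      omega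
    · rw [isAcyclic_iff_forall_adj_isBridge] at hac
      push_neg at hac
      obtain ⟨x, y, hadj, hnb⟩ := hac
      rw [isBridge_iff] at hnb
      push_neg at hnb
      have hr : (fromEdgeSet (↑S : Set (Sym2 V)) \ fromEdgeSet {s(x, y)}).Reachable x y := hnb
      rw [fe_sdiff] at hr
      have hmemS : s(x, y) ∈ S := (adj_fe.mp hadj).1
      have hconn : (fromEdgeSet (↑(S.erase s(x, y)) : Set (Sym2 V))).Connected := by
        haveI : Nonempty V := hc.nonempty
        have key : ∀ w, (fromEdgeSet (↑(S.erase s(x, y)) : Set (Sym2 V))).Reachable w x := by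
          intro w
          obtain ⟨p⟩ := hc.preconnected w x
          rcases reach_erase_or x y p with h1 | ⟨h1, _⟩ | ⟨h1, _⟩
          · exact h1
          · exact h1
          · exact h1.trans hr.symm
        exact ⟨fun a b => (key a).trans (key b).symm⟩
      have h4 := ih (S.erase s(x, y)) (Finset.erase_ssubset hmemS) hconn
      have h5 : (S.erase s(x, y)).card = S.card - 1 := Finset.card_erase_of_mem hmemS
      have h6 : 1 ≤ S.card := Finset.card_pos.mpr ⟨_, hmemS⟩
      omega

/-- In a spanning tree, removing an edge disconnects its endpoints. -/
private lemma tree_not_reach {S : Finset (Sym2 V)}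
    (hc : (fromEdgeSet (↑S : Set (Sym2 V))).Connected)
    (hcard : S.card = Fintype.card V - 1) {u v : V} (hm : s(u, v) ∈ S) (hne : u ≠ v) :
    ¬ (fromEdgeSet (↑(S.erase s(u, v)) : Set (Sym2 V))).Reachable u v := by
  intro hr
  haveI : Nonempty V := hc.nonempty
  have hconn : (fromEdgeSet (↑(S.erase s(u, v)) : Set (Sym2 V))).Connected := by
    have key : ∀ w, (fromEdgeSet (↑(S.erase s(u, v)) : Set (Sym2 V))).Reachable w u := by
      intro w
      obtain ⟨p⟩ := hc.preconnected w u
      rcases reach_erase_or u v p with h1 | ⟨h1, _⟩ | ⟨h1, _⟩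
      · exact h1
      · exact h1
      · exact h1.trans hr.symm
    exact ⟨fun a b => (key a).trans (key b).symm⟩
  have hb := conn_card_le _ hconn
  have h2 : (S.erase s(u, v)).card = S.card - 1 := Finset.card_erase_of_mem hm
  have h3 : 1 < Fintype.card V := Fintype.one_lt_card_iff_nontrivial.mpr ⟨u, v, hne⟩
  omega
set_option linter.unusedSectionVars false

/-- Key step: for spanning tree `A` and connected `B`, `f ∈ A \ B`, there is
`e ∈ B \ A` such that both exchanges are connected. -/
private lemma step_lemma {G : SimpleGraph V} (A B : Finset (Sym2 V))
    (hAG : (↑A : Set (Sym2 V)) ⊆ G.edgeSet) (hBG : (↑B : Set (Sym2 V)) ⊆ G.edgeSet)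
    (hAc : (fromEdgeSet (↑A : Set (Sym2 V))).Connected)
    (hAcard : A.card = Fintype.card V - 1)
    (hBc : (fromEdgeSet (↑B : Set (Sym2 V))).Connected)
    {f : Sym2 V} (hfA : f ∈ A) (hfB : f ∉ B) :
    ∃ e ∈ B, e ∉ A ∧
      (fromEdgeSet (↑(insert e (A.erase f)) : Set (Sym2 V))).Connected ∧
      (fromEdgeSet (↑(insert f (B.erase e)) : Set (Sym2 V))).Connected := by
  classical
  haveI : Nonempty V := hAc.nonempty
  induction f using Sym2.ind with
  | _ u v =>
  have hne : u ≠ v := by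
    have := G.not_isDiag_of_mem_edgeSet (hAG hfA)
    simpa [Sym2.mk_isDiag_iff] using this
  set X : V → Prop := fun w => (fromEdgeSet (↑(A.erase s(u, v)) : Set (Sym2 V))).Reachable w u
    with hX
  have hXu : X u := Reachable.refl _
  have hXv : ¬ X v := fun h => tree_not_reach hAc hAcard hfA hne h.symm
  obtain ⟨p0⟩ := hBc.preconnected u v
  obtain ⟨x, y, hmem, hx, hy, hux, hyv⟩ :=
    cross_lemma X (p0.toPath : (fromEdgeSet (↑B : Set (Sym2 V))).Walk u v)
      p0.toPath.2.isTrail hXu hXv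
  have hes := Walk.edges_subset_edgeSet _ hmem
  rw [edgeSet_fromEdgeSet] at hes
  have heB : s(x, y) ∈ B := Finset.mem_coe.mp hes.1
  have hxy : x ≠ y := by
    have := hes.2
    simpa [Sym2.mk_isDiag_iff] using this
  have heA : s(x, y) ∉ A := by
    intro hA
    by_cases hef : s(x, y) = s(u, v)
    · exact hfB (hef ▸ heB)
    · have hadj : (fromEdgeSet (↑(A.erase s(u, v)) : Set (Sym2 V))).Adj x y :=
        adj_fe.mpr ⟨Finset.mem_erase.mpr ⟨hef, hA⟩, hxy⟩
      exact hy (hadj.symm.reachable.trans hx)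
  -- y reaches v in A minus f
  have hyvA : (fromEdgeSet (↑(A.erase s(u, v)) : Set (Sym2 V))).Reachable y v := by
    obtain ⟨q⟩ := hAc.preconnected y v
    rcases reach_erase_or u v q with h1 | ⟨h1, _⟩ | ⟨h1, _⟩
    · exact h1
    · exact absurd h1 hy
    · exact h1
  refine ⟨s(x, y), heB, heA, ?_, ?_⟩
  · -- A - f + e connected
    have hmono : fromEdgeSet (↑(A.erase s(u, v)) : Set (Sym2 V)) ≤
        fromEdgeSet (↑(insert s(x, y) (A.erase s(u, v))) : Set (Sym2 V)) :=
      fromEdgeSet_mono (by exact_mod_cast Finset.subset_insert _ _)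
    have hadj : (fromEdgeSet (↑(insert s(x, y) (A.erase s(u, v))) : Set (Sym2 V))).Adj x y :=
      adj_fe.mpr ⟨Finset.mem_insert_self _ _, hxy⟩
    have key : ∀ w, (fromEdgeSet (↑(insert s(x, y) (A.erase s(u, v))) : Set (Sym2 V))).Reachable w u := by
      intro w
      obtain ⟨q⟩ := hAc.preconnected w u
      rcases reach_erase_or u v q with h1 | ⟨h1, _⟩ | ⟨h1, _⟩
      · exact h1.mono hmono
      · exact h1.mono hmono
      · exact ((h1.trans hyvA.symm).mono hmono).trans
          (hadj.symm.reachable.trans (hx.mono hmono))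
    exact ⟨fun a b => (key a).trans (key b).symm⟩
  · -- B - e + f connected
    have hmono : fromEdgeSet (↑(B.erase s(x, y)) : Set (Sym2 V)) ≤
        fromEdgeSet (↑(insert s(u, v) (B.erase s(x, y))) : Set (Sym2 V)) :=
      fromEdgeSet_mono (by exact_mod_cast Finset.subset_insert _ _)
    have hadjf : (fromEdgeSet (↑(insert s(u, v) (B.erase s(x, y))) : Set (Sym2 V))).Adj u v :=
      adj_fe.mpr ⟨Finset.mem_insert_self _ _, hne⟩
    have key : ∀ w, (fromEdgeSet (↑(insert s(u, v) (B.erase s(x, y))) : Set (Sym2 V))).Reachable w x := by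
      intro w
      obtain ⟨q⟩ := hBc.preconnected w x
      rcases reach_erase_or x y q with h1 | ⟨h1, _⟩ | ⟨h1, h2⟩
      · exact h1.mono hmono
      · exact h1.mono hmono
      · exact ((h1.trans hyv).mono hmono).trans
          ((hadjf.symm.reachable).trans (hux.mono hmono))
    exact ⟨fun a b => (key a).trans (key b).symm⟩
private lemma iterate_lemma {G : SimpleGraph V} (T Tstar : Finset (Sym2 V))
    (hT : IsSpanningTreeEdges G T) (wt : Sym2 V → ℝ) :
    ∀ (m : ℕ) (B : Finset (Sym2 V)), (↑B : Set (Sym2 V)) ⊆ G.edgeSet →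
      (fromEdgeSet (↑B : Set (Sym2 V))).Connected → B.card = Fintype.card V - 1 →
      T ∩ Tstar ⊆ B → B ⊆ T ∪ Tstar → (T \ B).card = m →
      ∃ ep fp : Fin m → Sym2 V,
        (∀ j, fp j ∈ T \ Tstar ∧ ep j ∈ Tstar \ T ∧
          IsSpanningTreeEdges G (insert (ep j) (T.erase (fp j)))) ∧
        (∑ e ∈ T, wt e) - (∑ e ∈ B, wt e) = ∑ j, (wt (fp j) - wt (ep j)) := by
  classical
  intro m
  induction m with
  | zero =>
    intro B hBG hBc hBcard hsub1 hsub2 hm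
    have hTB : T = B := by
      have hsub : T ⊆ B := by
        rwa [← Finset.sdiff_eq_empty_iff_subset, ← Finset.card_eq_zero]
      exact Finset.eq_of_subset_of_card_le hsub (by rw [hBcard, hT.2.2])
    exact ⟨Fin.elim0, Fin.elim0, fun j => j.elim0, by simp [hTB]⟩
  | succ m ih =>
    intro B hBG hBc hBcard hsub1 hsub2 hm
    have hTB : (T \ B).Nonempty := Finset.card_pos.mp (by omega)
    obtain ⟨f, hf⟩ := hTB
    obtain ⟨hfT, hfB⟩ := Finset.mem_sdiff.mp hf
    obtain ⟨e, heB, heT, hconnA, hconnB⟩ :=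
      step_lemma T B hT.1 hBG hT.2.1 hT.2.2 hBc hfT hfB
    have hef : e ≠ f := fun h => hfB (h ▸ heB)
    set B' := insert f (B.erase e) with hB'
    have hfBe : f ∉ B.erase e := fun h => hfB (Finset.mem_of_mem_erase h)
    have hB'G : (↑B' : Set (Sym2 V)) ⊆ G.edgeSet := by
      intro t ht
      rcases Finset.mem_insert.mp (Finset.mem_coe.mp ht) with rfl | ht'
      · exact hT.1 (Finset.mem_coe.mpr hfT)
      · exact hBG (Finset.mem_coe.mpr (Finset.mem_of_mem_erase ht'))
    have hBcard1 : 1 ≤ B.card := Finset.card_pos.mpr ⟨e, heB⟩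
    have hB'card : B'.card = Fintype.card V - 1 := by
      rw [hB', Finset.card_insert_of_notMem hfBe, Finset.card_erase_of_mem heB]
      omega
    have hsub1' : T ∩ Tstar ⊆ B' := by
      intro t ht
      have htT : t ∈ T := (Finset.mem_inter.mp ht).1
      have hte : t ≠ e := fun h => heT (h ▸ htT)
      exact Finset.mem_insert_of_mem (Finset.mem_erase.mpr ⟨hte, hsub1 ht⟩)
    have hsub2' : B' ⊆ T ∪ Tstar := by
      intro t ht
      rcases Finset.mem_insert.mp ht with rfl | ht'
      · exact Finset.mem_union_left _ hfT
      · exact hsub2 (Finset.mem_of_mem_erase ht')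
    have hdiff : T \ B' = (T \ B).erase f := by
      ext t
      constructor
      · intro ht
        obtain ⟨htT, htB'⟩ := Finset.mem_sdiff.mp ht
        have htf : t ≠ f := fun h => htB' (h ▸ Finset.mem_insert_self f _)
        have htB : t ∉ B := fun h => htB'
          (Finset.mem_insert_of_mem (Finset.mem_erase.mpr ⟨fun h2 => heT (h2 ▸ htT), h⟩))
        exact Finset.mem_erase.mpr ⟨htf, Finset.mem_sdiff.mpr ⟨htT, htB⟩⟩
      · intro ht
        obtain ⟨htf, ht2⟩ := Finset.mem_erase.mp ht
        obtain ⟨htT, htB⟩ := Finset.mem_sdiff.mp ht2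
        refine Finset.mem_sdiff.mpr ⟨htT, fun h => ?_⟩
        rcases Finset.mem_insert.mp h with rfl | h'
        · exact htf rfl
        · exact htB (Finset.mem_of_mem_erase h')
    have hm' : (T \ B').card = m := by
      rw [hdiff, Finset.card_erase_of_mem hf, hm]
      omega
    obtain ⟨ep', fp', hprop', hsum'⟩ := ih B' hB'G hconnB hB'card hsub1' hsub2' hm'
    refine ⟨Fin.cons e ep', Fin.cons f fp', ?_, ?_⟩
    · intro j
      refine Fin.cases ?_ ?_ j
      · simp only [Fin.cons_zero]
        have hfTs : f ∉ Tstar := fun h => hfB (hsub1 (Finset.mem_inter.mpr ⟨hfT, h⟩))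
        have heTs : e ∈ Tstar := by
          rcases Finset.mem_union.mp (hsub2 heB) with h | h
          · exact absurd h heT
          · exact h
        refine ⟨Finset.mem_sdiff.mpr ⟨hfT, hfTs⟩, Finset.mem_sdiff.mpr ⟨heTs, heT⟩,
          ?_, hconnA, ?_⟩
        · intro t ht
          rcases Finset.mem_insert.mp (Finset.mem_coe.mp ht) with rfl | ht'
          · exact hBG (Finset.mem_coe.mpr heB)
          · exact hT.1 (Finset.mem_coe.mpr (Finset.mem_of_mem_erase ht'))
        · have heTf : e ∉ T.erase f := fun h => heT (Finset.mem_of_mem_erase h)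
          have hT1 : 1 ≤ T.card := Finset.card_pos.mpr ⟨f, hfT⟩
          have h22 := hT.2.2
          rw [Finset.card_insert_of_notMem heTf, Finset.card_erase_of_mem hfT]
          omega
      · intro i
        simpa using hprop' i
    · have hsumB' : (∑ x ∈ B', wt x) = wt f + ((∑ x ∈ B, wt x) - wt e) := by
        rw [hB', Finset.sum_insert hfBe, ← Finset.add_sum_erase B wt heB]
        ring
      rw [Fin.sum_univ_succ]
      simp only [Fin.cons_zero, Fin.cons_succ]
      rw [← hsum', hsumB']
      ring

end ExchangeAux

/-- Exchange lemma (Neumann–Wegener, Lemma 2, combinatorial core): for a spanning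
tree `T` and an optimal spanning tree `T*` w.r.t. a nonnegative weight `w̃`, there
are at most `n - 1` exchanges `(e_j, f_j)` with `f_j ∈ T \ T*`, `e_j ∈ T* \ T`, each
producing a spanning tree, whose total weight decrease is at least `w̃(T) - w̃(T*)`. -/
theorem spanning_tree_exchange {V : Type*} [Fintype V] [DecidableEq V] (n : ℕ)
    (hn : Fintype.card V = n) (G : SimpleGraph V) (hG : G.Connected)
    (wt : Sym2 V → ℝ) (hwt : ∀ e, 0 ≤ wt e)
    (T Tstar : Finset (Sym2 V))
    (hT : IsSpanningTreeEdges G T) (hTs : IsSpanningTreeEdges G Tstar)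
    (hopt : ∀ T', IsSpanningTreeEdges G T' → ∑ e ∈ Tstar, wt e ≤ ∑ e ∈ T', wt e) :
    ∃ k : ℕ, k ≤ n - 1 ∧ ∃ ep fp : Fin k → Sym2 V,
      (∀ j, fp j ∈ T \ Tstar ∧ ep j ∈ Tstar \ T ∧
        IsSpanningTreeEdges G (insert (ep j) (T.erase (fp j)))) ∧
      (∑ e ∈ T, wt e) - ∑ e ∈ Tstar, wt e ≤ ∑ j, (wt (fp j) - wt (ep j)) := by
  classical
  subst hn
  refine ⟨(T \ Tstar).card, ?_, ?_⟩
  · calc (T \ Tstar).card ≤ T.card := Finset.card_le_card Finset.sdiff_subset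
      _ = Fintype.card V - 1 := hT.2.2
  · obtain ⟨ep, fp, hprop, hsum⟩ := iterate_lemma T Tstar hT wt (T \ Tstar).card Tstar
      hTs.1 hTs.2.1 hTs.2.2 Finset.inter_subset_right Finset.subset_union_right rfl
    exact ⟨ep, fp, hprop, le_of_eq hsum⟩
end
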